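/- Fix D ≥ 1, B ≥ 1, γ ∈ [0,1), and t ∈ ℝ. For z ∈ ℝ^D let z^b denote the coordinatewise b-th power. Let c_1, …, c_B ∈ ℝ^D, c_0 ∈ ℝ^D, and R(z) = Σ_{b=0}^B (1/b!) ⟨c_b, z^b⟩. Let μ₁, μ₂ be probability measures on ℝ^D with all coordinatewise moments up to order B integrable, and set J_i = (1/(1−γ)) ∫ R dμ_i for i = 1,2. Let ψ̃ : ℝ → ℝ be measurable with ∫_0^∞ ∫_ℝ |ψ̃((t−d)/β)| dd dβ ≤ 1, and suppose that for each i ∈ {1,2}, each b ∈ {1,…,B}, and each coordinate q ∈ {1,…,D} there is a bounded measurable function W_i^{(b,q)} : ℝ × (0,∞) → ℝ, with (d,β) ↦ W_i^{(b,q)}(d,β) ψ̃((t−d)/β) integrable, such that the q-th coordinate of the b-th coordinatewise moment satisfies ∫ (z_q)^b dμ_i(z) = ∫_0^∞ ∫_ℝ W_i^{(b,q)}(d,β) ψ̃((t−d)/β) dd dβ. Then |J₁ − J₂| ≤ (√D/(1−γ)) · Σ_{b=1}^B (‖c_b‖₂ / b!) · max_{1≤q≤D} sup_{d∈ℝ,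 β>0} |W₁^{(b,q)}(d,β) − W₂^{(b,q)}(d,β)|. -/

import Mathlib

open MeasureTheory

/-- The coordinatewise `b`-th power of a vector `z ∈ ℝ^D`. -/
noncomputable def coordPow {D : ℕ} (z : EuclideanSpace ℝ (Fin D)) (b : ℕ) :
    EuclideanSpace ℝ (Fin D) := WithLp.toLp 2 (fun q => z q ^ b)

/-- Wavelet-domain features indicate policy performance: if
`R(z) = Σ_{b=0}^B ⟨c_b, z^b⟩ / b!`, `J_i = (1/(1−γ)) ∫ R dμ_i` for probability
measures `μ_i` on `ℝ^D` with integrable moments up to order `B`, and each coordinate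
moment `∫ (z_q)^b dμ_i` is reconstructed from a bounded measurable wavelet-domain
function `W_i^{(b,q)}` via the inverse wavelet transform against a dual mother wavelet
`ψ` whose reconstruction kernel has `L¹` mass at most `1`, then
`|J₁ − J₂| ≤ (√D/(1−γ)) Σ_{b=1}^B (‖c_b‖/b!) max_q sup_{d,β>0} |W₁^{(b,q)} − W₂^{(b,q)}|`. -/
theorem policy_performance_wavelet_bound
    {D : ℕ} (hD : 1 ≤ D) (B : ℕ) (hB : 1 ≤ B)
    (γ : ℝ) (hγ0 : 0 ≤ γ) (hγ1 : γ < 1) (t : ℝ)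
    (c : ℕ → EuclideanSpace ℝ (Fin D))
    (R : EuclideanSpace ℝ (Fin D) → ℝ)
    (hR : ∀ z, R z = ∑ b ∈ Finset.range (B + 1),
      (1 / (Nat.factorial b : ℝ)) * (inner ℝ (c b) (coordPow z b) : ℝ))
    (μ₁ μ₂ : Measure (EuclideanSpace ℝ (Fin D)))
    [IsProbabilityMeasure μ₁] [IsProbabilityMeasure μ₂]
    (hint₁ : ∀ b ≤ B, Integrable (fun z => coordPow z b) μ₁)
    (hint₂ : ∀ b ≤ B, Integrable (fun z => coordPow z b) μ₂)
    (J₁ J₂ : ℝ)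
    (hJ₁ : J₁ = (1 / (1 - γ)) * ∫ z, R z ∂μ₁)
    (hJ₂ : J₂ = (1 / (1 - γ)) * ∫ z, R z ∂μ₂)
    (ψ : ℝ → ℝ) (hψm : Measurable ψ)
    (hψint : Integrable (fun p : ℝ × ℝ => |ψ ((t - p.1) / p.2)|)
      (volume.restrict {p : ℝ × ℝ | 0 < p.2}))
    (hψ1 : (∫ p in {p : ℝ × ℝ | 0 < p.2}, |ψ ((t - p.1) / p.2)|) ≤ 1)
    (W₁ W₂ : ℕ → Fin D → ℝ → ℝ → ℝ)
    (hWm : ∀ b ∈ Finset.Icc 1 B, ∀ q : Fin D,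
      Measurable (fun p : ℝ × ℝ => W₁ b q p.1 p.2) ∧
      Measurable (fun p : ℝ × ℝ => W₂ b q p.1 p.2))
    (hWb : ∀ b ∈ Finset.Icc 1 B, ∀ q : Fin D,
      (∃ C, ∀ d β : ℝ, 0 < β → |W₁ b q d β| ≤ C) ∧
      (∃ C, ∀ d β : ℝ, 0 < β → |W₂ b q d β| ≤ C))
    (hWint : ∀ b ∈ Finset.Icc 1 B, ∀ q : Fin D,
      Integrable (fun p : ℝ × ℝ => W₁ b q p.1 p.2 * ψ ((t - p.1) / p.2))
        (volume.restrict {p : ℝ × ℝ | 0 < p.2}) ∧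
      Integrable (fun p : ℝ × ℝ => W₂ b q p.1 p.2 * ψ ((t - p.1) / p.2))
        (volume.restrict {p : ℝ × ℝ | 0 < p.2}))
    (hrec₁ : ∀ b ∈ Finset.Icc 1 B, ∀ q : Fin D,
      (∫ z, (z q) ^ b ∂μ₁) =
        ∫ p in {p : ℝ × ℝ | 0 < p.2}, W₁ b q p.1 p.2 * ψ ((t - p.1) / p.2))
    (hrec₂ : ∀ b ∈ Finset.Icc 1 B, ∀ q : Fin D,
      (∫ z, (z q) ^ b ∂μ₂) =
        ∫ p in {p : ℝ × ℝ | 0 < p.2}, W₂ b q p.1 p.2 * ψ ((t - p.1) / p.2)) :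
    |J₁ - J₂| ≤ (Real.sqrt D / (1 - γ)) *
      ∑ b ∈ Finset.Icc 1 B, (‖c b‖ / (Nat.factorial b : ℝ)) *
        ⨆ (q : Fin D) (d : ℝ) (β : Set.Ioi (0 : ℝ)),
          |W₁ b q d β - W₂ b q d β| := by
  have hγ : (0:ℝ) < 1 - γ := by linarith
  haveI : Nonempty (Fin D) := ⟨⟨0, hD⟩⟩
  haveI hne : Nonempty (Set.Ioi (0:ℝ)) := ⟨⟨1, by norm_num⟩⟩
  set S : ℕ → ℝ := fun b => ⨆ (q : Fin D) (d : ℝ) (β : Set.Ioi (0:ℝ)),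
      |W₁ b q d β - W₂ b q d β| with hSdef
  -- bounds on |W₁ - W₂|
  have hbd : ∀ b ∈ Finset.Icc 1 B, ∀ q : Fin D, ∃ C, ∀ d β : ℝ, 0 < β →
      |W₁ b q d β - W₂ b q d β| ≤ C := by
    intro b hb q
    obtain ⟨⟨C₁, h1⟩, ⟨C₂, h2⟩⟩ := hWb b hb q
    exact ⟨C₁ + C₂, fun d β hβ =>
      (abs_sub _ _).trans (add_le_add (h1 d β hβ) (h2 d β hβ))⟩
  -- key: pointwise bound by the supremum
  have key : ∀ b ∈ Finset.Icc 1 B, ∀ (q : Fin D) (d β : ℝ), 0 < β →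
      |W₁ b q d β - W₂ b q d β| ≤ S b := by
    intro b hb q d β hβ
    have hbdd2 : ∀ q' : Fin D, ∀ d' : ℝ,
        BddAbove (Set.range fun β' : Set.Ioi (0:ℝ) => |W₁ b q' d' β' - W₂ b q' d' β'|) := by
      intro q' d'
      obtain ⟨C, hC⟩ := hbd b hb q'
      exact ⟨C, by rintro x ⟨β', rfl⟩; exact hC d' β' β'.2⟩
    have hbdd1 : ∀ q' : Fin D,
        BddAbove (Set.range fun d' : ℝ =>
          ⨆ β' : Set.Ioi (0:ℝ), |W₁ b q' d' β' - W₂ b q' d' β'|) := by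
      intro q'
      obtain ⟨C, hC⟩ := hbd b hb q'
      exact ⟨C, by rintro x ⟨d', rfl⟩; exact ciSup_le fun β' => hC d' β' β'.2⟩
    have h1 : |W₁ b q d β - W₂ b q d β| ≤
        ⨆ β' : Set.Ioi (0:ℝ), |W₁ b q d β' - W₂ b q d β'| :=
      le_ciSup (hbdd2 q d) ⟨β, hβ⟩
    have h2 : (⨆ β' : Set.Ioi (0:ℝ), |W₁ b q d β' - W₂ b q d β'|) ≤
        ⨆ (d' : ℝ) (β' : Set.Ioi (0:ℝ)), |W₁ b q d' β' - W₂ b q d' β'| :=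
      le_ciSup (hbdd1 q) d
    refine h1.trans (h2.trans ?_)
    exact le_ciSup (f := fun q' : Fin D => ⨆ (d' : ℝ) (β' : Set.Ioi (0:ℝ)),
      |W₁ b q' d' β' - W₂ b q' d' β'|)
      (Set.Finite.bddAbove (Set.finite_range _)) q
  have Snonneg : ∀ b ∈ Finset.Icc 1 B, 0 ≤ S b := fun b hb =>
    (abs_nonneg _).trans (key b hb (Classical.arbitrary _) 0 1 one_pos)
  -- the set is measurable
  have hmeas : MeasurableSet {p : ℝ × ℝ | 0 < p.2} :=
    measurableSet_lt measurable_const measurable_snd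
  -- coordinatewise moment difference bound
  have coordbound : ∀ b ∈ Finset.Icc 1 B, ∀ q : Fin D,
      |(∫ z, (z q) ^ b ∂μ₁) - ∫ z, (z q) ^ b ∂μ₂| ≤ S b := by
    intro b hb q
    obtain ⟨hI1, hI2⟩ := hWint b hb q
    rw [hrec₁ b hb q, hrec₂ b hb q, ← integral_sub hI1 hI2]
    have hsub : Integrable (fun p : ℝ × ℝ =>
        (W₁ b q p.1 p.2 - W₂ b q p.1 p.2) * ψ ((t - p.1) / p.2))
        (volume.restrict {p : ℝ × ℝ | 0 < p.2}) := by
      exact (hI1.sub hI2).congr (Filter.Eventually.of_forall fun p => by simp [sub_mul])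
    calc |∫ p in {p : ℝ × ℝ | 0 < p.2},
          (W₁ b q p.1 p.2 * ψ ((t - p.1) / p.2) - W₂ b q p.1 p.2 * ψ ((t - p.1) / p.2))|
        ≤ ∫ p in {p : ℝ × ℝ | 0 < p.2},
          |(W₁ b q p.1 p.2 - W₂ b q p.1 p.2) * ψ ((t - p.1) / p.2)| := by
          simp_rw [← sub_mul]
          simpa [Real.norm_eq_abs, abs_mul] using norm_integral_le_integral_norm
            (μ := volume.restrict {p : ℝ × ℝ | 0 < p.2})
            (fun p : ℝ × ℝ => (W₁ b q p.1 p.2 - W₂ b q p.1 p.2) * ψ ((t - p.1) / p.2))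
      _ ≤ ∫ p in {p : ℝ × ℝ | 0 < p.2}, S b * |ψ ((t - p.1) / p.2)| := by
          refine integral_mono_ae hsub.abs (hψint.const_mul _) ?_
          filter_upwards [ae_restrict_mem hmeas] with p hp
          rw [abs_mul]
          exact mul_le_mul_of_nonneg_right (key b hb q p.1 p.2 hp) (abs_nonneg _)
      _ = S b * ∫ p in {p : ℝ × ℝ | 0 < p.2}, |ψ ((t - p.1) / p.2)| :=
          integral_const_mul _ _
      _ ≤ S b * 1 := mul_le_mul_of_nonneg_left hψ1 (Snonneg b hb)
      _ = S b := mul_one _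
  -- coordinates of the moment vectors
  have hMco : ∀ (μ : Measure (EuclideanSpace ℝ (Fin D))),
      (∀ b ≤ B, Integrable (fun z => coordPow z b) μ) →
      ∀ b ≤ B, ∀ q : Fin D,
        (∫ z, coordPow z b ∂μ) q = ∫ z, (z q) ^ b ∂μ := by
    intro μ hint b hb q
    have := (EuclideanSpace.proj q (𝕜 := ℝ)).integral_comp_comm (hint b hb)
    simpa [coordPow] using this.symm
  -- norm bound on the moment difference vector
  have normbound : ∀ b ∈ Finset.Icc 1 B,
      ‖(∫ z, coordPow z b ∂μ₁) - ∫ z, coordPow z b ∂μ₂‖ ≤ Real.sqrt D * S b := by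
    intro b hb
    have hbB : b ≤ B := (Finset.mem_Icc.mp hb).2
    set m : EuclideanSpace ℝ (Fin D) := (∫ z, coordPow z b ∂μ₁) - ∫ z, coordPow z b ∂μ₂
    have hmq : ∀ q : Fin D, |m q| ≤ S b := by
      intro q
      have : m q = (∫ z, (z q) ^ b ∂μ₁) - ∫ z, (z q) ^ b ∂μ₂ := by
        simp [m, hMco μ₁ hint₁ b hbB q, hMco μ₂ hint₂ b hbB q]
      rw [this]; exact coordbound b hb q
    rw [EuclideanSpace.norm_eq]
    have hsum : (∑ q : Fin D, ‖m q‖ ^ 2) ≤ ∑ _q : Fin D, S b ^ 2 := by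
      refine Finset.sum_le_sum fun q _ => ?_
      rw [Real.norm_eq_abs]
      have := hmq q
      nlinarith [abs_nonneg (m q)]
    calc Real.sqrt (∑ q : Fin D, ‖m q‖ ^ 2) ≤ Real.sqrt ((D : ℝ) * S b ^ 2) := by
          apply Real.sqrt_le_sqrt
          simpa using hsum
      _ = Real.sqrt D * S b := by
          rw [Real.sqrt_mul (Nat.cast_nonneg _), Real.sqrt_sq (Snonneg b hb)]
  -- expansion of ∫ R
  have hIR : ∀ (μ : Measure (EuclideanSpace ℝ (Fin D))),
      (∀ b ≤ B, Integrable (fun z => coordPow z b) μ) →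
      ∫ z, R z ∂μ = ∑ b ∈ Finset.range (B + 1),
        (1 / (Nat.factorial b : ℝ)) * (inner ℝ (c b) (∫ z, coordPow z b ∂μ) : ℝ) := by
    intro μ hint
    simp_rw [hR]
    rw [integral_finset_sum]
    · refine Finset.sum_congr rfl fun b hb => ?_
      rw [integral_const_mul,
        integral_inner (hint b (Nat.lt_succ_iff.mp (Finset.mem_range.mp hb)))]
    · intro b hb
      exact ((hint b (Nat.lt_succ_iff.mp (Finset.mem_range.mp hb))).const_inner _).const_mul _
  -- the b = 0 terms agree
  have h0 : (∫ z, coordPow z 0 ∂μ₁) = ∫ z, coordPow z 0 ∂μ₂ := by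
    have hconst : (fun z : EuclideanSpace ℝ (Fin D) => coordPow z 0) =
        fun _ => (WithLp.toLp 2 (fun _ => 1) : EuclideanSpace ℝ (Fin D)) := by
      funext z; ext q; simp [coordPow]
    rw [hconst, integral_const, integral_const]
    simp
  -- split the sum
  have hsplit : Finset.range (B + 1) = insert 0 (Finset.Icc 1 B) := by
    ext x; simp [Nat.lt_succ_iff]; omega
  have h0notin : (0 : ℕ) ∉ Finset.Icc 1 B := by simp
  have hdiff : J₁ - J₂ = (1 / (1 - γ)) * ∑ b ∈ Finset.Icc 1 B,
      (1 / (Nat.factorial b : ℝ)) *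
        (inner ℝ (c b) ((∫ z, coordPow z b ∂μ₁) - ∫ z, coordPow z b ∂μ₂) : ℝ) := by
    rw [hJ₁, hJ₂, hIR μ₁ hint₁, hIR μ₂ hint₂, ← mul_sub, ← Finset.sum_sub_distrib]
    congr 1
    rw [hsplit, Finset.sum_insert h0notin, h0, sub_self, zero_add]
    refine Finset.sum_congr rfl fun b hb => ?_
    rw [← mul_sub, ← inner_sub_right]
  rw [hdiff]
  rw [abs_mul, abs_of_pos (by positivity : (0:ℝ) < 1 / (1 - γ))]
  have hsumbound : |∑ b ∈ Finset.Icc 1 B, (1 / (Nat.factorial b : ℝ)) *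
      (inner ℝ (c b) ((∫ z, coordPow z b ∂μ₁) - ∫ z, coordPow z b ∂μ₂) : ℝ)| ≤
      ∑ b ∈ Finset.Icc 1 B, (1 / (Nat.factorial b : ℝ)) *
        (‖c b‖ * (Real.sqrt D * S b)) := by
    refine (Finset.abs_sum_le_sum_abs _ _).trans (Finset.sum_le_sum fun b hb => ?_)
    rw [abs_mul, abs_of_nonneg (by positivity : (0:ℝ) ≤ 1 / (Nat.factorial b : ℝ))]
    refine mul_le_mul_of_nonneg_left ?_ (by positivity)
    calc |(inner ℝ (c b) ((∫ z, coordPow z b ∂μ₁) - ∫ z, coordPow z b ∂μ₂) : ℝ)|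
        ≤ ‖c b‖ * ‖(∫ z, coordPow z b ∂μ₁) - ∫ z, coordPow z b ∂μ₂‖ :=
          abs_real_inner_le_norm _ _
      _ ≤ ‖c b‖ * (Real.sqrt D * S b) :=
          mul_le_mul_of_nonneg_left (normbound b hb) (norm_nonneg _)
  calc (1 / (1 - γ)) * |∑ b ∈ Finset.Icc 1 B, (1 / (Nat.factorial b : ℝ)) *
        (inner ℝ (c b) ((∫ z, coordPow z b ∂μ₁) - ∫ z, coordPow z b ∂μ₂) : ℝ)|
      ≤ (1 / (1 - γ)) * ∑ b ∈ Finset.Icc 1 B, (1 / (Nat.factorial b : ℝ)) *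
        (‖c b‖ * (Real.sqrt D * S b)) :=
        mul_le_mul_of_nonneg_left hsumbound (by positivity)
    _ = (Real.sqrt D / (1 - γ)) * ∑ b ∈ Finset.Icc 1 B,
        (‖c b‖ / (Nat.factorial b : ℝ)) * S b := by
        rw [Finset.mul_sum, Finset.mul_sum]
        refine Finset.sum_congr rfl fun b hb => ?_
        field_simp
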